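/- Let L be the Desarguesian 2-spread of F_q^n (n even, n ≥ 6). Let C¹ be the set of 4-dimensional subspaces containing exactly one member of L, and C² the set of 4-dimensional subspaces containing q²+1 members of L. Then every U ∈ C¹ is adjacent in the Grassmann graph J_q(n,4) to exactly q+1 subspaces of C². -/

import Mathlib

open Module Set

/-- Fiber-counting (equality version): if every fiber of `f` over the image of a
finite set `s` has `k` elements, then `s.ncard = (f '' s).ncard * k`. -/
lemma fiber_count_eq {α β : Type*} (s : Set α) (hs : s.Finite) (f : α → β) (k : ℕ)
    (h : ∀ b ∈ f '' s, {a ∈ s | f a = b}.ncard = k) :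
    s.ncard = (f '' s).ncard * k := by
  classical
  let t : Finset α := hs.toFinset
  have hst : s = ↑t := hs.coe_toFinset.symm
  have himg : f '' s = ↑(t.image f) := by rw [Finset.coe_image, hst]
  have hmaps : ∀ x ∈ t, f x ∈ t.image f := fun x hx => Finset.mem_image_of_mem f hx
  have hcard := Finset.card_eq_sum_card_fiberwise hmaps
  have hfib : ∀ b ∈ t.image f, (t.filter fun a => f a = b).card = k := by
    intro b hb
    have hb' : b ∈ f '' s := by rw [himg]; exact_mod_cast hb
    have : {a ∈ s | f a = b} = ↑(t.filter fun a => f a = b) := by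
      ext a; simp [hst]
    rw [← Set.ncard_coe_finset, ← this]
    exact h b hb'
  calc s.ncard = t.card := by rw [hst, Set.ncard_coe_finset]
    _ = ∑ b ∈ t.image f, (t.filter fun a => f a = b).card := hcard
    _ = ∑ _b ∈ t.image f, k := Finset.sum_congr rfl hfib
    _ = (t.image f).card * k := by rw [Finset.sum_const, smul_eq_mul]
    _ = (f '' s).ncard * k := by rw [himg, Set.ncard_coe_finset]

/-- Fiber-counting (inequality version). -/
lemma fiber_count_le {α β : Type*} (s : Set α) (hs : s.Finite) (f : α → β) (k : ℕ)
    (h : ∀ b ∈ f '' s, {a ∈ s | f a = b}.ncard ≤ k) :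
    s.ncard ≤ (f '' s).ncard * k := by
  classical
  let t : Finset α := hs.toFinset
  have hst : s = ↑t := hs.coe_toFinset.symm
  have himg : f '' s = ↑(t.image f) := by rw [Finset.coe_image, hst]
  have hmaps : ∀ x ∈ t, f x ∈ t.image f := fun x hx => Finset.mem_image_of_mem f hx
  have hcard := Finset.card_eq_sum_card_fiberwise hmaps
  have hfib : ∀ b ∈ t.image f, (t.filter fun a => f a = b).card ≤ k := by
    intro b hb
    have hb' : b ∈ f '' s := by rw [himg]; exact_mod_cast hb
    have hset : {a ∈ s | f a = b} = ↑(t.filter fun a => f a = b) := by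
      ext a; simp [hst]
    have := h b hb'
    rwa [hset, Set.ncard_coe_finset] at this
  calc s.ncard = t.card := by rw [hst, Set.ncard_coe_finset]
    _ = ∑ b ∈ t.image f, (t.filter fun a => f a = b).card := hcard
    _ ≤ ∑ _b ∈ t.image f, k := Finset.sum_le_sum hfib
    _ = (t.image f).card * k := by rw [Finset.sum_const, smul_eq_mul]
    _ = (f '' s).ncard * k := by rw [himg, Set.ncard_coe_finset]

/-- Let `L` be the Desarguesian 2-spread of `F_q^n ≅ E = F_{q^n}`
(n even, n ≥ 6), arising from the subfield `F'` of order `q²`. Every 4-dimensional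
subspace `U` containing exactly one member of `L` is adjacent in the Grassmann graph
`J_q(n,4)` to exactly `q+1` of the 4-dimensional subspaces containing `q²+1` members
of `L`. -/
theorem stmt12 (F E : Type*) [Field F] [Fintype F] [Field E] [Algebra F E]
    (n : ℕ) (hn : Even n) (hn6 : 6 ≤ n) (hdim : Module.finrank F E = n)
    (F' : Subalgebra F E) (hF' : Module.finrank F F' = 2)
    (L : Set (Submodule F E))
    (hL : ∀ X : Submodule F E,
      X ∈ L ↔ ∃ a : E, a ≠ 0 ∧ (X : Set E) = (fun x => a * x) '' (F' : Set E))
    (U : Submodule F E) (hU4 : Module.finrank F U = 4)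
    (hU1 : {X ∈ L | X ≤ U}.ncard = 1) :
    {V : Submodule F E | Module.finrank F V = 4 ∧
      {X ∈ L | X ≤ V}.ncard = Fintype.card F ^ 2 + 1 ∧
      Module.finrank F (U ⊓ V : Submodule F E) = 3}.ncard = Fintype.card F + 1 := by
  classical
  set q := Fintype.card F with hqdef
  have hq2 : 2 ≤ q := Fintype.one_lt_card
  haveI : FiniteDimensional F E :=
    FiniteDimensional.of_finrank_pos (by rw [hdim]; omega)
  haveI : Finite E := Module.finite_of_finite F
  haveI : Fintype E := Fintype.ofFinite E
  -- the map `a ↦ a • F'` defining spread members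
  set Xl : E → Submodule F E :=
    fun a => (Subalgebra.toSubmodule F').map (LinearMap.mulLeft F a) with hXl
  have memX : ∀ a x : E, x ∈ Xl a ↔ ∃ s ∈ F', x = a * s := by
    intro a x
    simp only [hXl, Submodule.mem_map, Subalgebra.mem_toSubmodule,
      LinearMap.mulLeft_apply]
    exact ⟨fun ⟨s, hs, h⟩ => ⟨s, hs, h.symm⟩, fun ⟨s, hs, h⟩ => ⟨s, hs, h.symm⟩⟩
  have self_memX : ∀ a : E, a ∈ Xl a := fun a => (memX a a).mpr ⟨1, one_mem _, (mul_one a).symm⟩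
  have memL : ∀ X, X ∈ L ↔ ∃ a : E, a ≠ 0 ∧ X = Xl a := by
    intro X
    rw [hL]
    have hset : ∀ a : E, (Xl a : Set E) = (fun x => a * x) '' (F' : Set E) := by
      intro a
      simp [hXl, Submodule.map_coe]; rfl
    constructor
    · rintro ⟨a, ha, h⟩
      exact ⟨a, ha, SetLike.coe_injective (h.trans (hset a).symm)⟩
    · rintro ⟨a, ha, h⟩
      exact ⟨a, ha, by rw [h, hset a]⟩
  -- cardinality of a submodule
  have hcard : ∀ W : Submodule F E, (W : Set E).ncard = q ^ Module.finrank F W := by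
    intro W
    have h1 : (W : Set E).ncard = Nat.card W := (Nat.card_coe_set_eq _).symm
    rw [h1, Nat.card_eq_fintype_card, Module.card_eq_pow_finrank (K := F) (V := W)]
  have hcard_diff : ∀ W X : Submodule F E, X ≤ W →
      ((W : Set E) \ (X : Set E)).ncard = q ^ Module.finrank F W - q ^ Module.finrank F X := by
    intro W X hXW
    rw [Set.ncard_diff (by exact_mod_cast hXW) (Set.toFinite _), hcard, hcard]
  have hcard_diff0 : ∀ W : Submodule F E,
      ((W : Set E) \ {0}).ncard = q ^ Module.finrank F W - 1 := by
    intro W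
    rw [Set.ncard_diff (by simpa using W.zero_mem) (Set.toFinite _), hcard,
      Set.ncard_singleton]
  -- finrank of spread members
  have frX : ∀ a : E, a ≠ 0 → Module.finrank F (Xl a) = 2 := by
    intro a ha
    have hinj : Function.Injective (LinearMap.mulLeft F a) := by
      intro x y h
      exact mul_left_cancel₀ ha h
    have e := Submodule.equivMapOfInjective (LinearMap.mulLeft F a) hinj
      (Subalgebra.toSubmodule F')
    rw [hXl]
    rw [← LinearEquiv.finrank_eq e, Subalgebra.finrank_toSubmodule, hF']
  -- inverses in F'
  haveI : Finite ↥F' := Subtype.finite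
  have hfield : IsField ↥F' := Finite.isField_of_domain ↥F'
  have hinv : ∀ s : E, s ∈ F' → s ≠ 0 → ∃ t ∈ F', s * t = 1 := by
    intro s hs hs0
    obtain ⟨t, ht⟩ := hfield.mul_inv_cancel
      (a := (⟨s, hs⟩ : ↥F')) (fun h => hs0 (congrArg Subtype.val h))
    exact ⟨(t : E), t.2, congrArg Subtype.val ht⟩
  -- multiplication by F' stabilizes each spread member
  have hstab : ∀ a x s : E, x ∈ Xl a → s ∈ F' → x * s ∈ Xl a := by
    intro a x s hx hs
    obtain ⟨r, hr, hxr⟩ := (memX a x).mp hx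
    exact (memX a _).mpr ⟨r * s, mul_mem hr hs, by rw [hxr, mul_assoc]⟩
  -- a nonzero element of a spread member determines it
  have hXeq : ∀ a x : E, x ∈ Xl a → x ≠ 0 → Xl x = Xl a := by
    intro a x hx hx0
    obtain ⟨s, hs, hxs⟩ := (memX a x).mp hx
    have hs0 : s ≠ 0 := by rintro rfl; exact hx0 (by rw [hxs, mul_zero])
    obtain ⟨t, ht, hst⟩ := hinv s hs hs0
    ext z
    rw [memX, memX]
    constructor
    · rintro ⟨r, hr, rfl⟩
      exact ⟨s * r, mul_mem hs hr, by rw [hxs, mul_assoc]⟩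
    · rintro ⟨r, hr, rfl⟩
      refine ⟨t * r, mul_mem ht hr, ?_⟩
      rw [hxs]
      calc a * r = a * ((s * t) * r) := by rw [hst, one_mul]
        _ = a * s * (t * r) := by ring
  -- counting spread members inside a "stable" 4-dimensional subspace
  have count_lines : ∀ V : Submodule F E, Module.finrank F V = 4 →
      (∀ v ∈ V, Xl v ≤ V) → {X ∈ L | X ≤ V}.ncard = q ^ 2 + 1 := by
    intro V hV4 hVst
    have himg : Xl '' ((V : Set E) \ {0}) = {X ∈ L | X ≤ V} := by
      ext X
      constructor
      · rintro ⟨v, ⟨hvV, hv0⟩, rfl⟩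
        exact ⟨(memL _).mpr ⟨v, by simpa using hv0, rfl⟩, hVst v hvV⟩
      · rintro ⟨hXL, hXV⟩
        obtain ⟨a, ha, rfl⟩ := (memL X).mp hXL
        exact ⟨a, ⟨hXV (self_memX a), by simpa using ha⟩, rfl⟩
    have hfib := fiber_count_eq ((V : Set E) \ {0}) (Set.toFinite _) Xl (q ^ 2 - 1) ?_
    · rw [himg] at hfib
      rw [hcard_diff0, hV4] at hfib
      have h1 : 1 ≤ q := by omega
      have hq2pos : 1 ≤ q ^ 2 := Nat.one_le_pow _ _ (by omega)
      have hkey : q ^ 4 - 1 = {X ∈ L | X ≤ V}.ncard * (q ^ 2 - 1) := hfib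
      have harith : (q ^ 2 + 1) * (q ^ 2 - 1) = q ^ 4 - 1 := by
        have h4 : 1 ≤ q ^ 4 := Nat.one_le_pow _ _ (by omega)
        zify [hq2pos, h4]
        ring
      have hpos : 0 < q ^ 2 - 1 := by
        have : 2 ^ 2 ≤ q ^ 2 := Nat.pow_le_pow_left hq2 2
        omega
      exact Nat.eq_of_mul_eq_mul_right hpos (by rw [harith, hkey])
    · rintro X ⟨v, ⟨hvV, hv0⟩, rfl⟩
      have hv0' : v ≠ 0 := by simpa using hv0
      have hfibset : {w ∈ (V : Set E) \ {0} | Xl w = Xl v} = (Xl v : Set E) \ {0} := by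
        ext w
        constructor
        · rintro ⟨⟨hwV, hw0⟩, hw⟩
          exact ⟨hw ▸ self_memX w, hw0⟩
        · rintro ⟨hwX, hw0⟩
          exact ⟨⟨hVst v hvV hwX, hw0⟩, hXeq v w hwX (by simpa using hw0)⟩
      rw [hfibset, hcard_diff0, frX v hv0']
  -- a 4-dim subspace containing q²+1 spread members is stable
  have count_to_stable : ∀ V : Submodule F E, Module.finrank F V = 4 →
      {X ∈ L | X ≤ V}.ncard = q ^ 2 + 1 → ∀ v ∈ V, Xl v ≤ V := by
    intro V hV4 hVc
    set B : Set E := {x ∈ (V : Set E) | x ≠ 0 ∧ Xl x ≤ V} with hB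
    have himg : Xl '' B = {X ∈ L | X ≤ V} := by
      ext X
      constructor
      · rintro ⟨v, ⟨hvV, hv0, hvle⟩, rfl⟩
        exact ⟨(memL _).mpr ⟨v, hv0, rfl⟩, hvle⟩
      · rintro ⟨hXL, hXV⟩
        obtain ⟨a, ha, rfl⟩ := (memL X).mp hXL
        exact ⟨a, ⟨hXV (self_memX a), ha, hXV⟩, rfl⟩
    have hfib := fiber_count_eq B (Set.toFinite _) Xl (q ^ 2 - 1) ?_
    · rw [himg, hVc] at hfib
      -- B has the same cardinality as V \ {0}
      have hBsub : B ⊆ (V : Set E) \ {0} := by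
        rintro x ⟨hxV, hx0, _⟩
        exact ⟨hxV, by simpa using hx0⟩
      have hVc' : ((V : Set E) \ {0}).ncard = q ^ 4 - 1 := by
        rw [hcard_diff0, hV4]
      have harith : (q ^ 2 + 1) * (q ^ 2 - 1) = q ^ 4 - 1 := by
        have hq2pos : 1 ≤ q ^ 2 := Nat.one_le_pow _ _ (by omega)
        have h4 : 1 ≤ q ^ 4 := Nat.one_le_pow _ _ (by omega)
        zify [hq2pos, h4]
        ring
      have hBeq : B = (V : Set E) \ {0} := by
        apply Set.eq_of_subset_of_ncard_le hBsub _ (Set.toFinite _)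
        rw [hVc', ← harith, ← hfib]
      intro v hvV
      rcases eq_or_ne v 0 with rfl | hv0
      · intro z hz
        obtain ⟨s, _, hzs⟩ := (memX 0 z).mp hz
        rw [hzs, zero_mul]
        exact V.zero_mem
      · have : v ∈ B := by rw [hBeq]; exact ⟨hvV, by simpa using hv0⟩
        exact this.2.2
    · rintro X ⟨v, ⟨hvV, hv0, hvle⟩, rfl⟩
      have hfibset : {w ∈ B | Xl w = Xl v} = (Xl v : Set E) \ {0} := by
        ext w
        constructor
        · rintro ⟨⟨hwV, hw0, _⟩, hw⟩
          exact ⟨hw ▸ self_memX w, by simpa using hw0⟩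
        · rintro ⟨hwX, hw0⟩
          have hw0' : w ≠ 0 := by simpa using hw0
          have hXw : Xl w = Xl v := hXeq v w hwX hw0'
          exact ⟨⟨hvle hwX, hw0', hXw ▸ hvle⟩, hXw⟩
      rw [hfibset, hcard_diff0, frX v hv0]
  -- extract the unique spread member of U
  obtain ⟨X₀, hX₀⟩ := Set.ncard_eq_one.mp hU1
  have hX₀mem : X₀ ∈ {X ∈ L | X ≤ U} := by rw [hX₀]; exact rfl
  have hX₀L : X₀ ∈ L := hX₀mem.1
  have hX₀U : X₀ ≤ U := hX₀mem.2
  have huniq : ∀ X ∈ L, X ≤ U → X = X₀ := by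
    intro X hXL hXU
    have : X ∈ {X ∈ L | X ≤ U} := ⟨hXL, hXU⟩
    rwa [hX₀, Set.mem_singleton_iff] at this
  obtain ⟨a₀, ha₀, hXa₀⟩ := (memL X₀).mp hX₀L
  have frX₀ : Module.finrank F X₀ = 2 := by rw [hXa₀]; exact frX a₀ ha₀
  have hX₀stable : ∀ x s : E, x ∈ X₀ → s ∈ F' → x * s ∈ X₀ := by
    intro x s hx hs
    rw [hXa₀] at hx ⊢
    exact hstab a₀ x s hx hs
  have hX₀eq : ∀ x : E, x ∈ X₀ → x ≠ 0 → Xl x = X₀ := by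
    intro x hx hx0
    rw [hXa₀] at hx ⊢
    exact hXeq a₀ x hx hx0
  -- the target set
  set S : Set (Submodule F E) := {V : Submodule F E | Module.finrank F V = 4 ∧
      {X ∈ L | X ≤ V}.ncard = q ^ 2 + 1 ∧
      Module.finrank F (U ⊓ V : Submodule F E) = 3} with hS
  -- the map u ↦ X₀ ⊔ Xl u
  set f : E → Submodule F E := fun u => X₀ ⊔ Xl u with hf
  set s : Set E := (U : Set E) \ (X₀ : Set E) with hs
  -- basic properties of elements of s
  have hs_ne : ∀ u ∈ s, u ≠ 0 := by
    rintro u ⟨_, hu⟩ rfl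
    exact hu X₀.zero_mem
  have hfu_stable : ∀ u : E, ∀ v ∈ f u, Xl v ≤ f u := by
    intro u v hv z hz
    obtain ⟨x, hx, y, hy, hxy⟩ := Submodule.mem_sup.mp hv
    obtain ⟨r, hr, hzr⟩ := (memX v z).mp hz
    have : z = x * r + y * r := by rw [hzr, ← hxy]; ring
    rw [this]
    exact Submodule.add_mem _ (Submodule.mem_sup_left (hX₀stable x r hx hr))
      (Submodule.mem_sup_right (hstab u y r hy hr))
  have hfu_inf : ∀ u ∈ s, X₀ ⊓ Xl u = ⊥ := by
    intro u hu
    rw [Submodule.eq_bot_iff]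
    rintro z ⟨hz₀, hzu⟩
    by_contra hz0
    have h1 : Xl z = X₀ := hX₀eq z hz₀ hz0
    have h2 : Xl z = Xl u := hXeq u z hzu hz0
    exact hu.2 (by rw [← h1, h2]; exact self_memX u)
  have hfu4 : ∀ u ∈ s, Module.finrank F (f u) = 4 := by
    intro u hu
    show Module.finrank F (X₀ ⊔ Xl u : Submodule F E) = 4
    have := Submodule.finrank_sup_add_finrank_inf_eq X₀ (Xl u)
    rw [hfu_inf u hu, finrank_bot, frX₀, frX u (hs_ne u hu)] at this
    omega
  have hfuU : ∀ u ∈ s, f u ≠ U := by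
    intro u hu hEq
    have hcount : {X ∈ L | X ≤ U}.ncard = q ^ 2 + 1 := by
      rw [← hEq]
      exact count_lines (f u) (hfu4 u hu) (hfu_stable u)
    rw [hU1] at hcount
    have : q ^ 2 ≠ 0 := pow_ne_zero _ (by omega)
    omega
  have hfu_mem : ∀ u ∈ s, u ∈ f u := fun u _ => Submodule.mem_sup_right (self_memX u)
  have hfu_inf3 : ∀ u ∈ s, Module.finrank F (U ⊓ f u : Submodule F E) = 3 := by
    intro u hu
    have hu0 : u ≠ 0 := hs_ne u hu
    -- lower bound via X₀ ⊔ span F {u}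
    have hspan_inf : X₀ ⊓ Submodule.span F {u} = ⊥ := by
      rw [Submodule.eq_bot_iff]
      rintro z ⟨hz₀, hzs⟩
      obtain ⟨c, rfl⟩ := Submodule.mem_span_singleton.mp hzs
      by_contra hz0
      have hc : c ≠ 0 := by rintro rfl; exact hz0 (zero_smul F u)
      have : u ∈ X₀ := by
        have := X₀.smul_mem c⁻¹ hz₀
        rwa [inv_smul_smul₀ hc] at this
      exact hu.2 this
    have hsub3 : Module.finrank F (X₀ ⊔ Submodule.span F {u} : Submodule F E) = 3 := by
      have := Submodule.finrank_sup_add_finrank_inf_eq X₀ (Submodule.span F {u})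
      rw [hspan_inf, finrank_bot, frX₀, finrank_span_singleton hu0] at this
      omega
    have hle : X₀ ⊔ Submodule.span F {u} ≤ U ⊓ f u := by
      apply sup_le
      · exact le_inf hX₀U le_sup_left
      · rw [Submodule.span_le, Set.singleton_subset_iff]
        exact ⟨hu.1, hfu_mem u hu⟩
    have h3le : 3 ≤ Module.finrank F (U ⊓ f u : Submodule F E) := by
      rw [← hsub3]
      exact Submodule.finrank_mono hle
    have hle4 : Module.finrank F (U ⊓ f u : Submodule F E) ≤ 4 := by
      have := Submodule.finrank_mono (inf_le_right :  U ⊓ f u ≤ f u)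
      rw [hfu4 u hu] at this
      exact this
    have hne4 : Module.finrank F (U ⊓ f u : Submodule F E) ≠ 4 := by
      intro h4
      have h1 : U ⊓ f u = f u := Submodule.eq_of_le_of_finrank_eq inf_le_right
        (by rw [h4, hfu4 u hu])
      have h2 : f u ≤ U := by rw [← h1]; exact inf_le_left
      exact hfuU u hu (Submodule.eq_of_le_of_finrank_eq h2 (by rw [hfu4 u hu, hU4]))
    omega
  -- forward inclusion
  have hforward : ∀ u ∈ s, f u ∈ S := by
    intro u hu
    exact ⟨hfu4 u hu, count_lines (f u) (hfu4 u hu) (hfu_stable u), hfu_inf3 u hu⟩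
  -- every V ∈ S contains X₀ and is stable
  have hback : ∀ V ∈ S, X₀ ≤ V ∧ ∀ v ∈ V, Xl v ≤ V := by
    rintro V ⟨hV4, hVc, hUV3⟩
    have hVstable : ∀ v ∈ V, Xl v ≤ V := count_to_stable V hV4 hVc
    -- find a spread member inside U ⊓ V via pigeonhole
    have hexists : ∃ X ∈ L, X ≤ U ⊓ V := by
      by_contra hcon
      push_neg at hcon
      set W : Submodule F E := U ⊓ V with hW
      have hWle := fiber_count_le ((W : Set E) \ {0}) (Set.toFinite _) Xl (q - 1) ?_
      · -- bound the number of fibers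
        have himgsub : Xl '' ((W : Set E) \ {0}) ⊆ {X ∈ L | X ≤ V} := by
          rintro X ⟨w, ⟨hwW, hw0⟩, rfl⟩
          have hw0' : w ≠ 0 := by simpa using hw0
          exact ⟨(memL _).mpr ⟨w, hw0', rfl⟩, hVstable w (Submodule.mem_inf.mp hwW).2⟩
        have himgcard : (Xl '' ((W : Set E) \ {0})).ncard ≤ q ^ 2 + 1 := by
          rw [← hVc]
          exact Set.ncard_le_ncard himgsub (Set.toFinite _)
        have hWcard : ((W : Set E) \ {0}).ncard = q ^ 3 - 1 := by
          rw [hcard_diff0, hUV3]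
        rw [hWcard] at hWle
        have hfinal : q ^ 3 - 1 ≤ (q ^ 2 + 1) * (q - 1) :=
          le_trans hWle (Nat.mul_le_mul_right _ himgcard)
        have h1 : 1 ≤ q := by omega
        have h3 : 1 ≤ q ^ 3 := Nat.one_le_pow _ _ (by omega)
        have hq2q : q < q ^ 2 := by
          calc q = q ^ 1 := (pow_one q).symm
            _ < q ^ 2 := Nat.pow_lt_pow_right (by omega) (by omega)
        zify [h1, h3] at hfinal
        nlinarith
      · -- each fiber is small
        rintro X ⟨w, ⟨hwW, hw0⟩, rfl⟩
        have hw0' : w ≠ 0 := by simpa using hw0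
        have hfibsub : {w' ∈ (W : Set E) \ {0} | Xl w' = Xl w} ⊆
            ((Xl w ⊓ W : Submodule F E) : Set E) \ {0} := by
          rintro w' ⟨⟨hw'W, hw'0⟩, hw'⟩
          exact ⟨⟨hw' ▸ self_memX w', hw'W⟩, hw'0⟩
        have hfr_le : Module.finrank F (Xl w ⊓ W : Submodule F E) ≤ 1 := by
          by_contra hfr
          push_neg at hfr
          have hfr2 : Module.finrank F (Xl w ⊓ W : Submodule F E) = 2 := by
            have := Submodule.finrank_mono (inf_le_left : Xl w ⊓ W ≤ Xl w)
            rw [frX w hw0'] at this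
            omega
          have : Xl w ⊓ W = Xl w := Submodule.eq_of_le_of_finrank_eq inf_le_left
            (by rw [hfr2, frX w hw0'])
          exact hcon (Xl w) ((memL _).mpr ⟨w, hw0', rfl⟩) (by rw [← this]; exact inf_le_right)
        calc {w' ∈ (W : Set E) \ {0} | Xl w' = Xl w}.ncard
            ≤ (((Xl w ⊓ W : Submodule F E) : Set E) \ {0}).ncard :=
              Set.ncard_le_ncard hfibsub (Set.toFinite _)
          _ = q ^ Module.finrank F (Xl w ⊓ W : Submodule F E) - 1 := hcard_diff0 _
          _ ≤ q ^ 1 - 1 := by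
              have := Nat.pow_le_pow_right (le_trans one_le_two hq2 : 1 ≤ q) hfr_le
              omega
          _ = q - 1 := by rw [pow_one]
    obtain ⟨X, hXL, hXle⟩ := hexists
    have hXeq₀ : X = X₀ := huniq X hXL (le_trans hXle inf_le_left)
    exact ⟨hXeq₀ ▸ le_trans hXle inf_le_right, hVstable⟩
  -- fibers of the final map
  have hfiber : ∀ V ∈ S, {u ∈ s | f u = V} = ((U ⊓ V : Submodule F E) : Set E) \ (X₀ : Set E) := by
    intro V hV
    obtain ⟨hX₀V, hVstable⟩ := hback V hV
    ext u
    constructor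
    · rintro ⟨hus, rfl⟩
      exact ⟨⟨hus.1, hfu_mem u hus⟩, hus.2⟩
    · rintro ⟨⟨huU, huV⟩, huX₀⟩
      have hus : u ∈ s := ⟨huU, huX₀⟩
      refine ⟨hus, ?_⟩
      have hle : f u ≤ V := sup_le hX₀V (hVstable u huV)
      exact Submodule.eq_of_le_of_finrank_eq hle (by rw [hfu4 u hus, hV.1])
  -- image of the final map
  have himage : f '' s = S := by
    ext V
    constructor
    · rintro ⟨u, hu, rfl⟩
      exact hforward u hu
    · intro hV
      obtain ⟨hX₀V, hVstable⟩ := hback V hV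
      have hnle : ¬(U ⊓ V ≤ X₀) := by
        intro hle
        have := Submodule.finrank_mono hle
        rw [hV.2.2, frX₀] at this
        omega
      obtain ⟨u, huUV, huX₀⟩ := SetLike.not_le_iff_exists.mp hnle
      have hus : u ∈ s := ⟨(Submodule.mem_inf.mp huUV).1, huX₀⟩
      refine ⟨u, hus, ?_⟩
      have hle : f u ≤ V := sup_le hX₀V (hVstable u (Submodule.mem_inf.mp huUV).2)
      exact Submodule.eq_of_le_of_finrank_eq hle (by rw [hfu4 u hus, hV.1])
  -- final count
  have hmain := fiber_count_eq s (Set.toFinite _) f (q ^ 3 - q ^ 2) ?_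
  · rw [himage] at hmain
    have hscard : s.ncard = q ^ 4 - q ^ 2 := by
      rw [hs, hcard_diff U X₀ hX₀U, hU4, frX₀]
    rw [hscard] at hmain
    have hq23 : q ^ 2 ≤ q ^ 3 := Nat.pow_le_pow_right (by omega) (by omega)
    have hq24 : q ^ 2 ≤ q ^ 4 := Nat.pow_le_pow_right (by omega) (by omega)
    have harith : (q + 1) * (q ^ 3 - q ^ 2) = q ^ 4 - q ^ 2 := by
      zify [hq23, hq24]
      ring
    have hpos : 0 < q ^ 3 - q ^ 2 := by
      have : q ^ 2 < q ^ 3 := Nat.pow_lt_pow_right (by omega) (by omega)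
      omega
    apply Nat.eq_of_mul_eq_mul_right hpos
    rw [harith, ← hmain]
  · rintro V hV
    rw [himage] at hV
    rw [hfiber V hV, hcard_diff (U ⊓ V) X₀ (le_inf hX₀U (hback V hV).1), hV.2.2, frX₀]
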